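/- With g the sieving map on [0,1]², the Dirac measure δ at s₂ = (1/2,1) is a global SRB measure for g: for every continuous φ: [0,1]² → ℝ and Lebesgue-a.e. (x,p), the Birkhoff averages (1/n)∑_{k=0}^{n-1} φ(g^k(x,p)) converge to φ(s₂). -/

import Mathlib

open Filter MeasureTheory

/-- The sieving map `g` on the unit square `Y = [0,1] × [0,1]`. -/
noncomputable def g : ℝ × ℝ → ℝ × ℝ := fun z =>
  let x := z.1
  let p := z.2
  if p = 1 then (1 / 2, 1)
  else if x < (1 - p) / 2 then (2 * x / (1 - p), p / (1 + p))
  else if x ≤ (1 + p) / 2 then (1 / 2, 1)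
  else (2 * (x - (1 + p) / 2) / (1 - p), p / (1 + p))

lemma g_snd_one {z : ℝ × ℝ} (h : z.2 = 1) : g z = (1 / 2, 1) := by
  simp [g, h]

lemma g_fix (n : ℕ) : g^[n] ((1 : ℝ) / 2, (1 : ℝ)) = (1 / 2, 1) :=
  Function.iterate_fixed (g_snd_one rfl) n

lemma g_left {x p : ℝ} (hp : p ≠ 1) (h : x < (1 - p) / 2) :
    g (x, p) = (2 * x / (1 - p), p / (1 + p)) := by
  simp [g, hp, h]

lemma g_mid {x p : ℝ} (hp : p ≠ 1) (h1 : ¬ x < (1 - p) / 2) (h2 : x ≤ (1 + p) / 2) :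
    g (x, p) = (1 / 2, 1) := by
  simp [g, hp, h1, h2]

lemma g_right {x p : ℝ} (hp : p ≠ 1) (h1 : ¬ x < (1 - p) / 2) (h2 : ¬ x ≤ (1 + p) / 2) :
    g (x, p) = (2 * (x - (1 + p) / 2) / (1 - p), p / (1 + p)) := by
  simp [g, hp, h1, h2]

/-- The set of `x ∈ [0,1]` whose orbit (at initial level `p`) is not yet absorbed at time `n`. -/
def Bad (p : ℝ) (n : ℕ) : Set ℝ :=
  {x | x ∈ Set.Icc (0 : ℝ) 1 ∧ (g^[n] (x, p)).2 ≠ 1}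

lemma bad_subset_Icc (p : ℝ) (n : ℕ) : Bad p n ⊆ Set.Icc (0 : ℝ) 1 := fun _ h => h.1

lemma bad_succ_subset {p : ℝ} (hp0 : 0 < p) (hp1 : p < 1) (n : ℕ) :
    Bad p (n + 1) ⊆
      ((fun x => 2 * x / (1 - p)) ⁻¹' Bad (p / (1 + p)) n ∩ Set.Ico 0 ((1 - p) / 2)) ∪
      ((fun x => 2 * (x - (1 + p) / 2) / (1 - p)) ⁻¹' Bad (p / (1 + p)) n ∩
        Set.Ioc ((1 + p) / 2) 1) := by
  rintro x ⟨⟨hx0, hx1⟩, hne⟩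
  rw [Function.iterate_succ_apply] at hne
  have hp1' : p ≠ 1 := ne_of_lt hp1
  have h1p : (0 : ℝ) < 1 - p := by linarith
  by_cases h : x < (1 - p) / 2
  · left
    rw [g_left hp1' h] at hne
    refine ⟨⟨⟨by positivity, ?_⟩, hne⟩, ⟨hx0, h⟩⟩
    rw [div_le_one h1p]; linarith
  · by_cases h2 : x ≤ (1 + p) / 2
    · exfalso
      rw [g_mid hp1' h h2, g_fix n] at hne
      exact hne rfl
    · right
      rw [g_right hp1' h h2] at hne
      push_neg at h2
      refine ⟨⟨⟨div_nonneg (by linarith) h1p.le, ?_⟩, hne⟩, ⟨h2, hx1⟩⟩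
      rw [div_le_one h1p]; linarith

lemma vol_pre_left {p : ℝ} (hp1 : p < 1) (S : Set ℝ) :
    volume ((fun x => 2 * x / (1 - p)) ⁻¹' S) = ENNReal.ofReal ((1 - p) / 2) * volume S := by
  have h1p : (0 : ℝ) < 1 - p := by linarith
  have ha : (2 / (1 - p) : ℝ) ≠ 0 := by positivity
  have hfun : (fun x : ℝ => 2 * x / (1 - p)) = (fun x => (2 / (1 - p)) * x) := by
    funext x; ring
  rw [hfun, Real.volume_preimage_mul_left ha]
  congr 1
  rw [show ((2 / (1 - p) : ℝ))⁻¹ = (1 - p) / 2 by field_simp, abs_of_pos (by positivity)]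

lemma vol_pre_right {p : ℝ} (hp1 : p < 1) (S : Set ℝ) :
    volume ((fun x => 2 * (x - (1 + p) / 2) / (1 - p)) ⁻¹' S) =
      ENNReal.ofReal ((1 - p) / 2) * volume S := by
  have hfun : (fun x : ℝ => 2 * (x - (1 + p) / 2) / (1 - p)) =
      (fun y : ℝ => 2 * y / (1 - p)) ∘ (fun x : ℝ => (-((1 + p) / 2)) + x) := by
    funext x; simp [Function.comp]; ring
  rw [hfun, Set.preimage_comp, measure_preimage_add, vol_pre_left hp1]

lemma bad_bound : ∀ n : ℕ, ∀ p : ℝ, 0 < p → p < 1 →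
    volume (Bad p (n + 1)) ≤ ENNReal.ofReal ((1 - p) / (1 + n * p)) := by
  intro n
  induction n with
  | zero =>
    intro p hp0 hp1
    have h1p : (0 : ℝ) < 1 - p := by linarith
    calc volume (Bad p 1)
        ≤ volume (((fun x => 2 * x / (1 - p)) ⁻¹' Bad (p / (1 + p)) 0 ∩ Set.Ico 0 ((1 - p) / 2)) ∪
            ((fun x => 2 * (x - (1 + p) / 2) / (1 - p)) ⁻¹' Bad (p / (1 + p)) 0 ∩
              Set.Ioc ((1 + p) / 2) 1)) := measure_mono (bad_succ_subset hp0 hp1 0)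
      _ ≤ volume (Set.Ico (0:ℝ) ((1 - p) / 2)) + volume (Set.Ioc ((1 + p) / 2) (1:ℝ)) :=
          le_trans (measure_union_le _ _)
            (add_le_add (measure_mono Set.inter_subset_right)
              (measure_mono Set.inter_subset_right))
      _ = ENNReal.ofReal ((1 - p) / 2) + ENNReal.ofReal (1 - (1 + p) / 2) := by
          rw [Real.volume_Ico, Real.volume_Ioc, sub_zero]
      _ ≤ ENNReal.ofReal ((1 - p) / (1 + (0 : ℕ) * p)) := by
          rw [← ENNReal.ofReal_add (by positivity) (by linarith)]
          apply ENNReal.ofReal_le_ofReal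
          push_cast
          rw [zero_mul, add_zero, div_one]
          ring_nf
          linarith [le_refl (1 - p)]
  | succ n ih =>
    intro p hp0 hp1
    have h1p : (0 : ℝ) < 1 - p := by linarith
    have hq0 : 0 < p / (1 + p) := by positivity
    have hq1 : p / (1 + p) < 1 := by
      rw [div_lt_one (by linarith)]; linarith
    have hB := ih (p / (1 + p)) hq0 hq1
    set q := p / (1 + p) with hq
    set B := volume (Bad q (n + 1)) with hBdef
    have hqden : (0 : ℝ) < 1 + (n : ℝ) * q := by positivity
    calc volume (Bad p (n + 2))
        ≤ volume (((fun x => 2 * x / (1 - p)) ⁻¹' Bad q (n + 1) ∩ Set.Ico 0 ((1 - p) / 2)) ∪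
            ((fun x => 2 * (x - (1 + p) / 2) / (1 - p)) ⁻¹' Bad q (n + 1) ∩
              Set.Ioc ((1 + p) / 2) 1)) := measure_mono (bad_succ_subset hp0 hp1 (n + 1))
      _ ≤ volume ((fun x => 2 * x / (1 - p)) ⁻¹' Bad q (n + 1)) +
            volume ((fun x => 2 * (x - (1 + p) / 2) / (1 - p)) ⁻¹' Bad q (n + 1)) :=
          le_trans (measure_union_le _ _)
            (add_le_add (measure_mono Set.inter_subset_left)
              (measure_mono Set.inter_subset_left))
      _ = ENNReal.ofReal ((1 - p) / 2) * B + ENNReal.ofReal ((1 - p) / 2) * B := by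
          rw [vol_pre_left hp1, vol_pre_right hp1]
      _ ≤ ENNReal.ofReal ((1 - p) / 2) * ENNReal.ofReal ((1 - q) / (1 + n * q)) +
            ENNReal.ofReal ((1 - p) / 2) * ENNReal.ofReal ((1 - q) / (1 + n * q)) :=
          add_le_add (mul_le_mul_right hB _) (mul_le_mul_right hB _)
      _ = ENNReal.ofReal ((1 - p) / (1 + (n + 1 : ℕ) * p)) := by
          rw [← ENNReal.ofReal_mul (by positivity), ← two_mul,
            ← ENNReal.ofReal_ofNat, ← ENNReal.ofReal_mul (by norm_num)]
          congr 1
          have hq1' : (1 : ℝ) + p ≠ 0 := by linarith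
          have hden : (0 : ℝ) < 1 + ((n : ℝ) + 1) * p := by positivity
          rw [hq]
          push_cast
          field_simp
          ring
  
lemma bad_inter_null {p : ℝ} (hp0 : 0 < p) (hp1 : p < 1) :
    volume (⋂ n, Bad p n) = 0 := by
  have hle : ∀ n : ℕ, volume (⋂ m, Bad p m) ≤ ENNReal.ofReal ((1 - p) / (1 + n * p)) :=
    fun n => le_trans (measure_mono (Set.iInter_subset _ (n + 1))) (bad_bound n p hp0 hp1)
  have hden : Tendsto (fun n : ℕ => 1 + (n : ℝ) * p) atTop atTop :=
    tendsto_atTop_add_const_left _ 1 (tendsto_natCast_atTop_atTop.atTop_mul_const hp0)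
  have hreal : Tendsto (fun n : ℕ => (1 - p) / (1 + (n : ℝ) * p)) atTop (nhds 0) :=
    Tendsto.div_atTop tendsto_const_nhds hden
  have htend : Tendsto (fun n : ℕ => ENNReal.ofReal ((1 - p) / (1 + (n : ℝ) * p)))
      atTop (nhds 0) := by
    have := (ENNReal.continuous_ofReal.tendsto 0).comp hreal
    rwa [ENNReal.ofReal_zero] at this
  exact le_antisymm (ge_of_tendsto' htend hle) zero_le

lemma g_measurable : Measurable g := by
  unfold g
  refine Measurable.ite ?_ measurable_const ?_
  · exact measurableSet_eq_fun measurable_snd measurable_const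
  · refine Measurable.ite ?_ ?_ ?_
    · exact measurableSet_lt measurable_fst (((measurable_const.sub measurable_snd)).div_const 2)
    · exact ((measurable_fst.const_mul 2).div (measurable_const.sub measurable_snd)).prod
        (measurable_snd.div (measurable_const.add measurable_snd))
    · refine Measurable.ite ?_ measurable_const ?_
      · exact measurableSet_le measurable_fst
          (((measurable_const.add measurable_snd)).div_const 2)
      · exact (((measurable_fst.sub
            ((measurable_const.add measurable_snd).div_const 2)).const_mul 2).div
            (measurable_const.sub measurable_snd)).prod
          (measurable_snd.div (measurable_const.add measurable_snd))

/-- The set of points of the unit square that are never absorbed. -/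
def BadSet : Set (ℝ × ℝ) :=
  {z | z ∈ Set.Icc (0 : ℝ) 1 ×ˢ Set.Icc (0 : ℝ) 1 ∧ ∀ n : ℕ, (g^[n] z).2 ≠ 1}

lemma badSet_measurable : MeasurableSet BadSet := by
  have h1 : MeasurableSet (Set.Icc (0 : ℝ) 1 ×ˢ Set.Icc (0 : ℝ) 1) :=
    measurableSet_Icc.prod measurableSet_Icc
  have h2 : MeasurableSet {z : ℝ × ℝ | ∀ n : ℕ, (g^[n] z).2 ≠ 1} := by
    rw [Set.setOf_forall]
    refine MeasurableSet.iInter fun n => ?_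
    exact (measurableSet_eq_fun (measurable_snd.comp (g_measurable.iterate n))
      measurable_const).compl
  exact h1.inter h2

lemma badSet_null : volume BadSet = 0 := by
  have hswap : MeasurableSet (Prod.swap ⁻¹' BadSet) :=
    badSet_measurable.preimage measurable_swap
  have hkey : (volume : Measure (ℝ × ℝ)) (Prod.swap ⁻¹' BadSet) =
      (volume : Measure (ℝ × ℝ)) BadSet := by
    rw [Measure.volume_eq_prod]
    exact Measure.measurePreserving_swap.measure_preimage
      badSet_measurable.nullMeasurableSet
  rw [← hkey, Measure.volume_eq_prod]
  rw [Measure.measure_prod_null hswap]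
  have hp0 : ∀ᵐ p : ℝ, p ≠ 0 := by
    rw [ae_iff]
    have : {p : ℝ | ¬p ≠ 0} = {0} := by ext p; simp
    rw [this]
    exact Real.volume_singleton
  filter_upwards [hp0] with p hp
  show volume (Prod.mk p ⁻¹' (Prod.swap ⁻¹' BadSet)) = 0
  have hslice : Prod.mk p ⁻¹' (Prod.swap ⁻¹' BadSet) = {x : ℝ | (x, p) ∈ BadSet} := rfl
  rw [hslice]
  by_cases hp1 : p < 1
  · by_cases hp0' : 0 < p
    · refine measure_mono_null ?_ (bad_inter_null hp0' hp1)
      rintro x ⟨⟨hx, _⟩, hall⟩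
      exact Set.mem_iInter.2 fun n => ⟨hx, hall n⟩
    · -- p ≤ 0 and p ≠ 0, so p < 0 : not in the square, slice empty
      have hempty : {x : ℝ | (x, p) ∈ BadSet} = ∅ := by
        ext x
        simp only [Set.mem_setOf_eq, Set.mem_empty_iff_false, iff_false]
        rintro ⟨⟨_, hpmem⟩, _⟩
        exact hp (le_antisymm (not_lt.1 hp0') hpmem.1)
      rw [hempty]
      exact measure_empty
  · -- p ≥ 1; if in square then p = 1, absorbed at time 1
    have hempty : {x : ℝ | (x, p) ∈ BadSet} = ∅ := by
      ext x
      simp only [Set.mem_setOf_eq, Set.mem_empty_iff_false, iff_false]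
      rintro ⟨⟨_, hpmem⟩, hall⟩
      have hpe : p = 1 := le_antisymm hpmem.2 (not_lt.1 hp1)
      have : (g^[1] (x, p)).2 = 1 := by
        rw [Function.iterate_one, g_snd_one hpe]
      exact hall 1 this
    rw [hempty]
    exact measure_empty

/-- The Dirac measure at `s₂ = (1/2, 1)` is a global SRB measure for the sieving map `g`:
for every continuous `φ` and Lebesgue-a.e. point of the unit square, the Birkhoff averages
of `φ` converge to `φ(s₂)`. -/
theorem sieving_dirac_is_SRB (φ : ℝ × ℝ → ℝ) (hφ : Continuous φ) :
    ∀ᵐ z ∂(volume.restrict (Set.Icc (0 : ℝ) 1 ×ˢ Set.Icc (0 : ℝ) 1)),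
      Tendsto (fun n : ℕ => (n : ℝ)⁻¹ * ∑ k ∈ Finset.range n, φ (g^[k] z))
        atTop (nhds (φ (1 / 2, 1))) := by
  have hsq : MeasurableSet (Set.Icc (0 : ℝ) 1 ×ˢ Set.Icc (0 : ℝ) 1) :=
    measurableSet_Icc.prod measurableSet_Icc
  have hnull : (volume.restrict (Set.Icc (0 : ℝ) 1 ×ˢ Set.Icc (0 : ℝ) 1)) BadSet = 0 :=
    le_antisymm (le_trans (Measure.restrict_apply_le _ _) badSet_null.le) zero_le
  have hae : ∀ᵐ z ∂(volume.restrict (Set.Icc (0 : ℝ) 1 ×ˢ Set.Icc (0 : ℝ) 1)), z ∉ BadSet :=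
    measure_eq_zero_iff_ae_notMem.1 hnull
  have hmem : ∀ᵐ z ∂(volume.restrict (Set.Icc (0 : ℝ) 1 ×ˢ Set.Icc (0 : ℝ) 1)),
      z ∈ Set.Icc (0 : ℝ) 1 ×ˢ Set.Icc (0 : ℝ) 1 := ae_restrict_mem hsq
  filter_upwards [hae, hmem] with z hz hzm
  have habs : ∃ N : ℕ, (g^[N] z).2 = 1 := by
    by_contra hcon
    push_neg at hcon
    exact hz ⟨hzm, hcon⟩
  obtain ⟨N, hN⟩ := habs
  apply Filter.Tendsto.cesaro
  apply tendsto_atTop_of_eventually_const (i₀ := N + 1)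
  intro k hk
  have h1 : g^[N + 1] z = (1 / 2, 1) := by
    rw [Function.iterate_succ_apply']
    exact g_snd_one hN
  have hdecomp : k = (k - (N + 1)) + (N + 1) := (Nat.sub_add_cancel hk).symm
  rw [hdecomp, Function.iterate_add_apply, h1, g_fix]
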